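/- (Inclusion detected at one level) Let C be an abstract operator system on X = Her_d, and identify Her_d ⊗ Her_s with Her_{ds} via the Kronecker product. Then: (i) if C(d) ⊆ Psd_{d²}, then C(s) ⊆ Psd_{ds} for all s ≥ 1; (ii) if Psd_{d²} ⊆ C(d), then Psd_{ds} ⊆ C(s) for all s ≥ 1. -/

import Mathlib

open Matrix
open scoped TensorProduct Kronecker ComplexOrder

set_option maxHeartbeats 800000
set_option synthInstance.maxHeartbeats 200000
set_option linter.unusedSectionVars false

noncomputable section

/-- `Her_k`: the real vector space of Hermitian complex matrices indexed by `k`. -/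
abbrev HM (k : Type*) [Fintype k] [DecidableEq k] : Type _ := selfAdjoint (Matrix k k ℂ)

section Infrastructure

variable {I J : Type*} [Fintype I] [DecidableEq I] [Fintype J] [DecidableEq J]

/-- The compression map `B ↦ M^* B M : Her_I → Her_J` (ℝ-linear). -/
def compr (M : Matrix I J ℂ) : HM I →ₗ[ℝ] HM J where
  toFun B := ⟨Mᴴ * B.1 * M, Matrix.isHermitian_conjTranspose_mul_mul M B.2⟩
  map_add' A B := Subtype.ext (by simp [Matrix.mul_add, Matrix.add_mul])
  map_smul' r A := Subtype.ext (by simp [Matrix.mul_smul, Matrix.smul_mul])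

/-- The Kronecker product of Hermitian matrices. -/
def kronHerm (A : HM I) (B : HM J) : HM (I × J) :=
  ⟨A.1 ⊗ₖ B.1, by
    have hA : (A.1)ᴴ = A.1 := A.2
    have hB : (B.1)ᴴ = B.1 := B.2
    show star _ = _
    rw [Matrix.star_eq_conjTranspose]
    ext ⟨i1, i2⟩ ⟨j1, j2⟩
    simp only [Matrix.conjTranspose_apply, Matrix.kroneckerMap_apply, star_mul']
    rw [← Matrix.conjTranspose_apply, ← Matrix.conjTranspose_apply, hA, hB, mul_comm]⟩

def kronBil : HM I →ₗ[ℝ] HM J →ₗ[ℝ] HM (I × J) :=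
  LinearMap.mk₂ ℝ kronHerm
    (fun A A' B => Subtype.ext (by simp [kronHerm, Matrix.add_kronecker]))
    (fun r A B => Subtype.ext (by simp [kronHerm, Matrix.smul_kronecker]))
    (fun A B B' => Subtype.ext (by simp [kronHerm, Matrix.kronecker_add]))
    (fun r A B => Subtype.ext (by simp [kronHerm, Matrix.kronecker_smul]))

/-- The identification `Her_I ⊗ Her_J ≅ Her_{I×J}` (via the Kronecker product),
as a linear map. -/
def kron : TensorProduct ℝ (HM I) (HM J) →ₗ[ℝ] HM (I × J) :=
  TensorProduct.lift kronBil

end Infrastructure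

section Aux

variable {I J K : Type*} [Fintype I] [DecidableEq I] [Fintype J] [DecidableEq J]
  [Fintype K] [DecidableEq K]

lemma kron_tmul (A : HM I) (B : HM J) : (kron (A ⊗ₜ[ℝ] B)).1 = A.1 ⊗ₖ B.1 := rfl

lemma kronecker_conjT {I' J' : Type*} (A : Matrix I I' ℂ) (B : Matrix J J' ℂ) :
    (A ⊗ₖ B)ᴴ = Aᴴ ⊗ₖ Bᴴ := by
  ext ⟨i, a⟩ ⟨j, b⟩
  simp [Matrix.conjTranspose_apply, Matrix.kroneckerMap_apply, star_mul', mul_comm]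

lemma kron_map_compr (M : Matrix J K ℂ) (x : TensorProduct ℝ (HM I) (HM J)) :
    (kron (TensorProduct.map LinearMap.id (compr M) x)).1
      = ((1 : Matrix I I ℂ) ⊗ₖ M)ᴴ * (kron x).1 * ((1 : Matrix I I ℂ) ⊗ₖ M) := by
  induction x using TensorProduct.induction_on with
  | zero => simp
  | tmul A B =>
      rw [TensorProduct.map_tmul]
      show (A.1 ⊗ₖ (Mᴴ * B.1 * M)) = _
      rw [kron_tmul, kronecker_conjT, Matrix.conjTranspose_one,
        ← Matrix.mul_kronecker_mul, ← Matrix.mul_kronecker_mul, Matrix.one_mul, Matrix.mul_one]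
  | add x y hx hy => simp only [map_add, AddSubgroup.coe_add, hx, hy, Matrix.mul_add,
      Matrix.add_mul]

lemma dot_conj (N : Matrix I J ℂ) (X : Matrix I I ℂ) (w : J → ℂ) :
    dotProduct (star w) ((Nᴴ * X * N) *ᵥ w)
      = dotProduct (star (N *ᵥ w)) (X *ᵥ (N *ᵥ w)) := by
  rw [star_mulVec, ← Matrix.mulVec_mulVec, ← Matrix.mulVec_mulVec,
    dotProduct_mulVec (star w) Nᴴ, ← star_mulVec]

end Aux

section Aux2

variable {I J : Type*} [Fintype I] [DecidableEq I] [Fintype J] [DecidableEq J]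

def eM (i j : I) : Matrix I I ℂ := Matrix.of fun p q => if p = i ∧ q = j then 1 else 0

lemma eM_conjT (i j : I) : (eM i j)ᴴ = eM j i := by
  ext p q
  simp only [eM, Matrix.conjTranspose_apply, Matrix.of_apply, apply_ite (star : ℂ → ℂ),
    star_one, star_zero]
  simp [and_comm]

def Hm (i j : I) : HM I :=
  ⟨eM i j + eM j i, by
    show star _ = _
    rw [Matrix.star_eq_conjTranspose, Matrix.conjTranspose_add, eM_conjT, eM_conjT, add_comm]⟩

def Km (i j : I) : HM I :=
  ⟨Complex.I • (eM i j - eM j i), by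
    show star _ = _
    rw [star_smul, Matrix.star_eq_conjTranspose, Matrix.conjTranspose_sub, eM_conjT, eM_conjT]
    simp only [Complex.star_def, Complex.conj_I, smul_sub]
    module⟩

def wv (I : Type*) [DecidableEq I] : I × I → ℂ := fun p => if p.1 = p.2 then 1 else 0

def P0 (I : Type*) [Fintype I] [DecidableEq I] : TensorProduct ℝ (HM I) (HM I) :=
  (1/4 : ℝ) • ∑ i : I, ∑ j : I, (Hm i j ⊗ₜ[ℝ] Hm i j - Km i j ⊗ₜ[ℝ] Km i j)

lemma kron_P0 : (kron (P0 I)).1 = vecMulVec (wv I) (star (wv I)) := by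
  rw [P0, LinearMap.map_smul, map_sum]
  simp only [map_sum, map_sub]
  ext ⟨p,a⟩ ⟨q,b⟩
  simp only [selfAdjoint.val_smul, AddSubmonoidClass.coe_finset_sum, AddSubgroupClass.coe_sub,
    Matrix.smul_apply, Matrix.sum_apply, Matrix.sub_apply, kron_tmul,
    Matrix.kroneckerMap_apply, vecMulVec_apply]
  have hterm : ∀ i j : I, ((Hm i j).1 p q * (Hm i j).1 a b - (Km i j).1 p q * (Km i j).1 a b : ℂ)
      = (if p = i then (1:ℂ) else 0) * (if q = j then (1:ℂ) else 0) *
          ((if a = i then (1:ℂ) else 0) * (if b = j then (1:ℂ) else 0)) * 2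
        + (if q = i then (1:ℂ) else 0) * (if b = i then (1:ℂ) else 0) *
          ((if p = j then (1:ℂ) else 0) * (if a = j then (1:ℂ) else 0)) * 2 := by
    intro i j
    simp only [Hm, Km, eM, Matrix.add_apply, Matrix.smul_apply, Matrix.sub_apply,
      Matrix.of_apply, smul_eq_mul, ite_and]
    split_ifs <;> simp_all <;> ring_nf
  simp only [hterm]
  simp only [Finset.sum_add_distrib, ite_mul, mul_ite, mul_zero, zero_mul, mul_one, one_mul,
    Finset.sum_ite_eq, Finset.sum_ite_eq', Finset.sum_ite_irrel, Finset.sum_const_zero,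
    Finset.mem_univ, if_true, wv, Pi.star_apply]
  rw [Complex.real_smul]
  split_ifs <;> norm_num

lemma vecMulVec_star_posSemidef (u : J → ℂ) : (vecMulVec u (star u)).PosSemidef := by
  refine Matrix.PosSemidef.of_dotProduct_mulVec_nonneg ?_ ?_
  · ext p q
    simp [Matrix.conjTranspose_apply, vecMulVec_apply, mul_comm]
  · intro x
    have h : (vecMulVec u (star u)) *ᵥ x = (dotProduct (star u) x) • u := by
      ext p
      simp only [Matrix.mulVec, dotProduct, vecMulVec_apply, Pi.star_apply, Pi.smul_apply,
        smul_eq_mul, Finset.sum_mul]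
      exact Finset.sum_congr rfl fun q _ => by ring
    rw [h, dotProduct_smul, smul_eq_mul]
    have : dotProduct (star x) u = star (dotProduct (star u) x) := Matrix.star_dotProduct x u
    rw [this]
    exact mul_star_self_nonneg _

end Aux2

section Aux3

variable {I J : Type*} [Fintype I] [DecidableEq I] [Fintype J] [DecidableEq J]

lemma one_kron_mulVec_wv (M : Matrix J I ℂ) :
    ((1 : Matrix I I ℂ) ⊗ₖ M) *ᵥ (wv I) = fun p : I × J => M p.2 p.1 := by
  ext ⟨i, a⟩
  simp [Matrix.mulVec, dotProduct, Fintype.sum_prod_type, wv, Matrix.one_apply,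
    ite_mul, mul_ite, Finset.sum_ite_eq, Finset.sum_ite_eq']

lemma one_kron_conjT_mulVec_wv (N : Matrix I J ℂ) :
    ((1 : Matrix I I ℂ) ⊗ₖ N)ᴴ *ᵥ (wv I) = fun p : I × J => star (N p.1 p.2) := by
  ext ⟨i, a⟩
  simp [Matrix.mulVec, dotProduct, Fintype.sum_prod_type, wv, Matrix.one_apply,
    Matrix.conjTranspose_apply, ite_mul, mul_ite, Finset.sum_ite_eq, Finset.sum_ite_eq',
    apply_ite (star : ℂ → ℂ)]

lemma conj_vecMulVec (N : Matrix I J ℂ) (u : I → ℂ) :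
    Nᴴ * vecMulVec u (star u) * N = vecMulVec (Nᴴ *ᵥ u) (star (Nᴴ *ᵥ u)) := by
  ext p q
  simp only [Matrix.mul_apply, vecMulVec_apply, Pi.star_apply, Matrix.mulVec, dotProduct,
    Matrix.conjTranspose_apply, star_sum, star_mul', star_star, Finset.sum_mul,
    Finset.mul_sum]
  exact Finset.sum_congr rfl fun x _ => Finset.sum_congr rfl fun y _ => by ring

end Aux3

section Aux4

variable {I J : Type*} [Fintype I] [DecidableEq I] [Fintype J] [DecidableEq J]

def reblockP (C : Matrix (I × J) (I × J) ℂ) (i j : I) : HM J :=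
  ⟨Matrix.of fun a b => (C (i, a) (j, b) + star (C (i, b) (j, a))) / 2, by
    show star _ = _
    rw [Matrix.star_eq_conjTranspose]
    ext a b
    simp only [Matrix.conjTranspose_apply, Matrix.of_apply, star_div₀, star_add, star_star,
      star_ofNat]
    ring⟩

def reblockQ (C : Matrix (I × J) (I × J) ℂ) (i j : I) : HM J :=
  ⟨Matrix.of fun a b => (Complex.I * (star (C (i, b) (j, a)) - C (i, a) (j, b))) / 2, by
    show star _ = _
    rw [Matrix.star_eq_conjTranspose]
    ext a b
    simp only [Matrix.conjTranspose_apply, Matrix.of_apply, star_div₀, star_mul', star_sub,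
      star_star, star_ofNat, Complex.star_def, Complex.conj_I, Complex.conj_conj]
    ring⟩

def unkronAux (C : Matrix (I × J) (I × J) ℂ) : TensorProduct ℝ (HM I) (HM J) :=
  (1/2 : ℝ) • ∑ i : I, ∑ j : I, (Hm i j ⊗ₜ[ℝ] reblockP C i j + Km i j ⊗ₜ[ℝ] reblockQ C i j)

lemma reblockP_add (C C' : Matrix (I × J) (I × J) ℂ) (i j : I) :
    reblockP (C + C') i j = reblockP C i j + reblockP C' i j := by
  apply Subtype.ext
  ext a b
  simp only [reblockP, Matrix.add_apply, AddSubgroup.coe_add, Matrix.of_apply, star_add]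
  ring

lemma reblockQ_add (C C' : Matrix (I × J) (I × J) ℂ) (i j : I) :
    reblockQ (C + C') i j = reblockQ C i j + reblockQ C' i j := by
  apply Subtype.ext
  ext a b
  simp only [reblockQ, Matrix.add_apply, AddSubgroup.coe_add, Matrix.of_apply, star_add]
  ring

lemma unkronAux_add (C C' : Matrix (I × J) (I × J) ℂ) :
    unkronAux (C + C') = unkronAux C + unkronAux C' := by
  rw [unkronAux, unkronAux, unkronAux, ← smul_add, ← Finset.sum_add_distrib]
  congr 1
  refine Finset.sum_congr rfl fun i _ => ?_
  rw [← Finset.sum_add_distrib]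
  refine Finset.sum_congr rfl fun j _ => ?_
  rw [reblockP_add, reblockQ_add, TensorProduct.tmul_add, TensorProduct.tmul_add]
  abel

lemma unkronAux_zero : unkronAux (0 : Matrix (I × J) (I × J) ℂ) = 0 := by
  have hP : ∀ i j : I, reblockP (0 : Matrix (I × J) (I × J) ℂ) i j = 0 :=
    fun i j => Subtype.ext (by ext a b; simp [reblockP])
  have hQ : ∀ i j : I, reblockQ (0 : Matrix (I × J) (I × J) ℂ) i j = 0 :=
    fun i j => Subtype.ext (by ext a b; simp [reblockQ])
  simp [unkronAux, hP, hQ]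

lemma unkronAux_kron (z : TensorProduct ℝ (HM I) (HM J)) : unkronAux (kron z).1 = z := by
  induction z using TensorProduct.induction_on with
  | zero => rw [map_zero]; exact unkronAux_zero
  | add x y hx hy =>
      rw [map_add, AddSubgroup.coe_add, unkronAux_add, hx, hy]
  | tmul A B =>
      have hB : (B.1)ᴴ = B.1 := B.2
      have hA : (A.1)ᴴ = A.1 := A.2
      have hBs : ∀ a b, star (B.1 b a) = B.1 a b := fun a b => by
        rw [← Matrix.conjTranspose_apply, hB]
      have hP : ∀ i j : I, reblockP ((kron (A ⊗ₜ[ℝ] B)).1) i j = (A.1 i j).re • B := by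
        intro i j
        apply Subtype.ext
        ext a b
        simp only [reblockP, kron_tmul, Matrix.kroneckerMap_apply, Matrix.of_apply,
          selfAdjoint.val_smul, Matrix.smul_apply, star_mul', hBs, Complex.real_smul,
          Complex.star_def]
        linear_combination (norm := (push_cast; ring_nf)) (B.1 a b / 2) * Complex.add_conj (A.1 i j)
      have hQ : ∀ i j : I, reblockQ ((kron (A ⊗ₜ[ℝ] B)).1) i j = (A.1 i j).im • B := by
        intro i j
        apply Subtype.ext
        ext a b
        simp only [reblockQ, kron_tmul, Matrix.kroneckerMap_apply, Matrix.of_apply,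
          selfAdjoint.val_smul, Matrix.smul_apply, star_mul', hBs, Complex.real_smul,
          Complex.star_def]
        linear_combination (norm := (push_cast; ring_nf)) (-(Complex.I) * B.1 a b / 2) * Complex.sub_conj (A.1 i j)
          + (-((A.1 i j).im : ℂ) * B.1 a b) * Complex.I_sq
      rw [unkronAux]
      simp only [hP, hQ]
      have hcomb : ∀ i j : I,
          Hm i j ⊗ₜ[ℝ] ((A.1 i j).re • B) + Km i j ⊗ₜ[ℝ] ((A.1 i j).im • B)
            = ((A.1 i j).re • Hm i j + (A.1 i j).im • Km i j) ⊗ₜ[ℝ] B := by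
        intro i j
        rw [TensorProduct.add_tmul, TensorProduct.smul_tmul, TensorProduct.smul_tmul]
      simp only [hcomb]
      rw [show ∀ S : I → I → HM I, (∑ i : I, ∑ j : I, (S i j) ⊗ₜ[ℝ] B)
          = (∑ i : I, ∑ j : I, S i j) ⊗ₜ[ℝ] B from ?_, TensorProduct.smul_tmul']
      · congr 1
        apply Subtype.ext
        ext p q
        simp only [selfAdjoint.val_smul, AddSubmonoidClass.coe_finset_sum, AddSubgroup.coe_add,
          Matrix.smul_apply, Matrix.sum_apply, Matrix.add_apply, Hm, Km, eM,
          Matrix.of_apply, smul_eq_mul, ite_and, Complex.real_smul, Matrix.sub_apply]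
        have hAs : A.1 q p = star (A.1 p q) := by
          conv_lhs => rw [← hA]
          rw [Matrix.conjTranspose_apply]
        simp only [mul_sub, mul_add, mul_ite, ite_mul, mul_zero, zero_mul, mul_one, one_mul,
          Finset.sum_add_distrib, Finset.sum_sub_distrib, Finset.sum_ite_irrel,
          Finset.sum_ite_eq, Finset.sum_ite_eq', Finset.sum_const_zero, Finset.mem_univ,
          if_true, hAs, Complex.star_def, Complex.conj_re, Complex.conj_im]
        linear_combination (norm := (push_cast; ring_nf)) Complex.re_add_im (A.1 p q)
      · intro S
        symm
        rw [TensorProduct.sum_tmul]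
        exact Finset.sum_congr rfl fun i _ => TensorProduct.sum_tmul ..
  -- end
end Aux4


/-- A proper cone: a convex cone that is closed (equivalently, by the bipolar theorem in
finite dimensions, equal to its double dual cone), sharp, and full. -/
def IsProperCone {M : Type*} [AddCommGroup M] [Module ℝ M] (C : Set M) : Prop :=
  (∀ x ∈ C, ∀ y ∈ C, x + y ∈ C) ∧ (∀ r : ℝ, 0 ≤ r → ∀ x ∈ C, r • x ∈ C) ∧
  (∀ x, (∀ f : Module.Dual ℝ M, (∀ c ∈ C, 0 ≤ f c) → 0 ≤ f x) → x ∈ C) ∧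
  (∀ x ∈ C, -x ∈ C → x = 0) ∧ (∀ x : M, ∃ a ∈ C, ∃ b ∈ C, x = a - b)

/-- An abstract operator system on a real vector space `X`: a proper cone
`cone s ⊆ X ⊗ Her_s` for every level `s`, compatible with all matrix compressions. -/
structure AOS (X : Type*) [AddCommGroup X] [Module ℝ X] where
  cone : ∀ s : ℕ, Set (TensorProduct ℝ X (HM (Fin s)))
  proper : ∀ s, IsProperCone (cone s)
  compat : ∀ (s t : ℕ) (M : Matrix (Fin s) (Fin t) ℂ), ∀ A ∈ cone s,
    TensorProduct.map LinearMap.id (compr M) A ∈ cone t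

section Aux5

lemma conjT_mul_self_eq_sum {K : Type*} [Fintype K] (B : Matrix K K ℂ) :
    Bᴴ * B = ∑ k : K, Matrix.vecMulVec (star (B k)) (B k) := by
  ext p q
  simp [Matrix.mul_apply, Matrix.sum_apply, Matrix.vecMulVec_apply, Matrix.conjTranspose_apply]

variable {X : Type*} [AddCommGroup X] [Module ℝ X]

lemma AOS.zero_mem (C : AOS X) (s : ℕ) : (0 : TensorProduct ℝ X (HM (Fin s))) ∈ C.cone s := by
  obtain ⟨h1, h2, h3, h4, h5⟩ := C.proper s
  obtain ⟨a, ha, b, hb, hab⟩ := h5 0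
  simpa using h2 0 le_rfl a ha

lemma AOS.sum_mem (C : AOS X) (s : ℕ) {ι : Type*} (t : Finset ι)
    (g : ι → TensorProduct ℝ X (HM (Fin s))) (h : ∀ i ∈ t, g i ∈ C.cone s) :
    (∑ i ∈ t, g i) ∈ C.cone s := by
  classical
  induction t using Finset.induction_on with
  | empty => simpa using C.zero_mem s
  | insert a t hnot ih =>
      rw [Finset.sum_insert hnot]
      exact (C.proper s).1 _ (h _ (Finset.mem_insert_self _ _)) _
        (ih fun i hi => h i (Finset.mem_insert_of_mem hi))

end Aux5

/-- inclusion detected at one level: for an abstract operator system `C` on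
`X = Her_d` (identifying `Her_d ⊗ Her_s ≅ Her_{ds}` via the Kronecker product):
(i) if `C(d) ⊆ Psd_{d²}` then `C(s) ⊆ Psd_{ds}` for all `s`;
(ii) if `Psd_{d²} ⊆ C(d)` then `Psd_{ds} ⊆ C(s)` for all `s`. -/
theorem inclusion_detected_at_one_level (d : ℕ) (C : AOS (HM (Fin d))) :
    ((∀ A ∈ C.cone d, (kron A).1.PosSemidef) →
      ∀ s : ℕ, ∀ A ∈ C.cone s, (kron A).1.PosSemidef) ∧
    ((∀ x : TensorProduct ℝ (HM (Fin d)) (HM (Fin d)),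
        (kron x).1.PosSemidef → x ∈ C.cone d) →
      ∀ s : ℕ, ∀ x : TensorProduct ℝ (HM (Fin d)) (HM (Fin s)),
        (kron x).1.PosSemidef → x ∈ C.cone s) := by
  constructor
  · -- (i)
    intro hC s A hA
    refine Matrix.PosSemidef.of_dotProduct_mulVec_nonneg (kron A).2 fun v => ?_
    set M : Matrix (Fin s) (Fin d) ℂ := Matrix.of fun a i => v (i, a) with hM
    have h2 := (hC _ (C.compat s d M A hA)).dotProduct_mulVec_nonneg (wv (Fin d))
    rw [kron_map_compr, dot_conj, one_kron_mulVec_wv] at h2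
    have hv : (fun p : Fin d × Fin s => M p.2 p.1) = v := by
      ext ⟨i, a⟩; rfl
    rwa [hv] at h2
  · -- (ii)
    intro hC s x hx
    obtain ⟨B, hB⟩ : ∃ B : Matrix (Fin d × Fin s) (Fin d × Fin s) ℂ, (kron x).1 = Bᴴ * B := by
      open scoped MatrixOrder in
      obtain ⟨B, hB⟩ := CStarAlgebra.nonneg_iff_eq_star_mul_self.mp hx.nonneg
      exact ⟨B, hB⟩
    have hP0 : P0 (Fin d) ∈ C.cone d := by
      refine hC _ ?_
      rw [kron_P0]
      exact vecMulVec_star_posSemidef _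
    set N : (Fin d × Fin s) → Matrix (Fin d) (Fin s) ℂ :=
      fun k => Matrix.of fun i a => B k (i, a) with hN
    have hkr : ∀ k, (kron (TensorProduct.map LinearMap.id (compr (N k)) (P0 (Fin d)))).1
        = Matrix.vecMulVec (star (B k)) (B k) := by
      intro k
      rw [kron_map_compr, kron_P0, conj_vecMulVec, one_kron_conjT_mulVec_wv]
      have hu : (fun p : Fin d × Fin s => star (N k p.1 p.2)) = star (B k) := by
        ext ⟨i, a⟩; rfl
      rw [hu, star_star]
    have hxs : x = ∑ k : Fin d × Fin s,
        TensorProduct.map LinearMap.id (compr (N k)) (P0 (Fin d)) := by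
      have hkk : (kron x).1 = (kron (∑ k : Fin d × Fin s,
          TensorProduct.map LinearMap.id (compr (N k)) (P0 (Fin d)))).1 := by
        rw [map_sum, AddSubmonoidClass.coe_finset_sum]
        simp only [hkr]
        rw [hB, conjT_mul_self_eq_sum]
      calc x = unkronAux (kron x).1 := (unkronAux_kron x).symm
        _ = _ := by rw [hkk, unkronAux_kron]
    rw [hxs]
    exact C.sum_mem s _ _ fun k _ => C.compat d s (N k) _ hP0
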